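/- (Uniqueness of the Prony polynomial) Let z₁,...,z_s be distinct nonzero complex numbers, c₁,...,c_s nonzero, h_k = Σ_{j=1}^s c_j z_j^k, and m ≥ s. If a monic polynomial q of degree s satisfies Σ_{l=0}^s q_l h_{k+l} = 0 for all k ∈ {1,...,m}, then q(z) = ∏_{j=1}^s (z - z_j). -/

import Mathlib

open Polynomial

/-- Uniqueness of the Prony polynomial: if a monic polynomial `q` of degree `s`
annihilates the moments `h_k = ∑_j c_j z_j^k` for `k ∈ {1,…,m}` with `m ≥ s`,
distinct nonzero `z_j` and nonzero `c_j`, then `q = ∏_j (X - z_j)`. -/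
theorem stmt17 (s m : ℕ) (hm : s ≤ m) (z : Fin s → ℂ) (hz : Function.Injective z)
    (hz0 : ∀ j, z j ≠ 0) (c : Fin s → ℂ) (hc : ∀ j, c j ≠ 0)
    (q : ℂ[X]) (hqm : q.Monic) (hdeg : q.natDegree = s)
    (hann : ∀ k ∈ Finset.Icc 1 m, ∑ l ∈ Finset.range (s + 1),
      q.coeff l * ∑ j, c j * z j ^ (k + l) = 0) :
    q = ∏ j, (X - C (z j)) := by
  -- Step 1: rewrite the annihilation equations as ∑_j (c_j q(z_j) z_j) z_j^k = 0
  set w : Fin s → ℂ := fun j => c j * q.eval (z j) * z j with hw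
  have key : ∀ k : Fin s, ∑ j, w j * z j ^ (k : ℕ) = 0 := by
    intro k
    have hk : (k : ℕ) + 1 ∈ Finset.Icc 1 m := by
      simp only [Finset.mem_Icc]
      exact ⟨Nat.le_add_left 1 _, by omega⟩
    have h := hann _ hk
    have heval : ∀ j, q.eval (z j) = ∑ l ∈ Finset.range (s + 1), q.coeff l * z j ^ l := by
      intro j
      exact eval_eq_sum_range' (by omega) _
    calc ∑ j, w j * z j ^ (k : ℕ)
        = ∑ j, ∑ l ∈ Finset.range (s + 1), q.coeff l * (c j * z j ^ ((k : ℕ) + 1 + l)) := by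
          refine Finset.sum_congr rfl fun j _ => ?_
          rw [hw]
          simp only [heval j, Finset.sum_mul, Finset.mul_sum]
          refine Finset.sum_congr rfl fun l _ => ?_
          rw [pow_add, pow_add, pow_one]
          ring
      _ = ∑ l ∈ Finset.range (s + 1), q.coeff l * ∑ j, c j * z j ^ ((k : ℕ) + 1 + l) := by
          rw [Finset.sum_comm]
          simp [Finset.mul_sum]
      _ = 0 := h
  -- Step 2: Vandermonde forces w = 0, hence q(z_j) = 0
  have hw0 : w = 0 := by
    apply Matrix.eq_zero_of_mulVec_eq_zero
      (M := (Matrix.vandermonde z).transpose)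
      (by rw [Matrix.det_transpose]; exact Matrix.det_vandermonde_ne_zero_iff.mpr hz)
    funext k
    simpa [Matrix.mulVec, dotProduct, Matrix.vandermonde, mul_comm] using key k
  have hroot : ∀ j, q.eval (z j) = 0 := by
    intro j
    have := congrFun hw0 j
    simp only [hw, Pi.zero_apply, mul_eq_zero] at this
    rcases this with (h | h) | h
    · exact absurd h (hc j)
    · exact h
    · exact absurd h (hz0 j)
  -- Step 3: ∏ (X - z_j) divides q
  have hq0 : q ≠ 0 := hqm.ne_zero
  have hle : (Finset.univ.val.map z) ≤ q.roots := by
    rw [Multiset.le_iff_count]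
    intro a
    by_cases ha : a ∈ Finset.univ.val.map z
    · obtain ⟨j, _, rfl⟩ := Multiset.mem_map.mp ha
      have h1 : (Finset.univ.val.map z).count (z j) ≤ 1 :=
        Multiset.nodup_iff_count_le_one.mp
          ((Multiset.nodup_map_iff_of_injective hz).mpr Finset.univ.nodup) _
      have h2 : 1 ≤ q.roots.count (z j) :=
        Multiset.one_le_count_iff_mem.mpr ((mem_roots hq0).mpr (hroot j))
      omega
    · rw [Multiset.count_eq_zero.mpr ha]
      exact Nat.zero_le _
  have hdvd : (∏ j, (X - C (z j))) ∣ q := by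
    have := (Multiset.prod_X_sub_C_dvd_iff_le_roots hq0 (Finset.univ.val.map z)).mpr hle
    rw [Multiset.map_map] at this
    convert this using 1
    rfl
  -- Step 4: both monic of the same degree
  have hPm : (∏ j, (X - C (z j))).Monic := monic_prod_of_monic _ _ fun j _ => monic_X_sub_C _
  have hPdeg : (∏ j, (X - C (z j))).natDegree = s := by
    rw [natDegree_prod _ _ fun j _ => X_sub_C_ne_zero (z j)]
    simp
  exact (eq_of_dvd_of_natDegree_le_of_leadingCoeff hdvd (by rw [hdeg, hPdeg])
    (by rw [hPm.leadingCoeff, hqm.leadingCoeff])).symm
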